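/- Let r ≥ 1 be an integer and let G be a connected graph on 2r+1 vertices. If G contains an induced subgraph isomorphic to K_{2r} or an induced subgraph isomorphic to K_{r,r}, then G is not edge-critical equimatchable. -/

import Mathlib

open SimpleGraph

/-- `M` is a maximal matching of `G` (viewed as a subgraph of `G`): it is a matching and it is
not properly contained in any other matching of `G`. -/
def IsMaximalMatching {V : Type*} (G : SimpleGraph V) (M : G.Subgraph) : Prop :=
  M.IsMatching ∧ ∀ M' : G.Subgraph, M'.IsMatching → M ≤ M' → M' = M

/-- `G` is equimatchable if all maximal matchings of `G` have the same cardinality. -/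
def Equimatchable {V : Type*} (G : SimpleGraph V) : Prop :=
  ∀ M₁ M₂ : G.Subgraph, IsMaximalMatching G M₁ → IsMaximalMatching G M₂ →
    M₁.edgeSet.ncard = M₂.edgeSet.ncard

/-- The matching number ν(G): the maximum cardinality of a matching of `G`. -/
noncomputable def matchNum {V : Type*} (G : SimpleGraph V) : ℕ :=
  sSup {n : ℕ | ∃ M : G.Subgraph, M.IsMatching ∧ M.edgeSet.ncard = n}

/-- `G` is vertex-critical equimatchable (VCE): `G` is equimatchable and deleting any vertex
yields a non-equimatchable graph. -/
def VCE {V : Type*} (G : SimpleGraph V) : Prop :=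
  Equimatchable G ∧ ∀ v : V, ¬ Equimatchable (G.induce {u | u ≠ v})

/-- `G` is edge-critical equimatchable (ECE): `G` is equimatchable and deleting any edge
yields a non-equimatchable graph. -/
def ECE {V : Type*} (G : SimpleGraph V) : Prop :=
  Equimatchable G ∧ ∀ u v : V, G.Adj u v → ¬ Equimatchable (G.deleteEdges {s(u, v)})

/-- `G` is factor-critical: deleting any vertex yields a graph with a perfect matching. -/
def FactorCritical {V : Type*} (G : SimpleGraph V) : Prop :=
  ∀ v : V, ∃ M : (G.induce {u | u ≠ v}).Subgraph, M.IsPerfectMatching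

/-- `G` is 2-connected: at least 3 vertices, connected, and deleting any vertex leaves a
connected graph. -/
def TwoConnected {V : Type*} [Fintype V] (G : SimpleGraph V) : Prop :=
  3 ≤ Fintype.card V ∧ G.Connected ∧ ∀ v : V, (G.induce {u | u ≠ v}).Connected

/-- `G` is bipartite: its vertex set can be partitioned into two parts such that every edge
joins the two parts. -/
def IsBipartiteGraph {V : Type*} (G : SimpleGraph V) : Prop :=
  ∃ s : Set V, ∀ u w : V, G.Adj u w → (u ∈ s ↔ w ∉ s)

/-- `G` is randomly matchable: every matching of `G` extends to a perfect matching. -/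
def RandomlyMatchable {V : Type*} (G : SimpleGraph V) : Prop :=
  ∀ M : G.Subgraph, M.IsMatching → ∃ P : G.Subgraph, M ≤ P ∧ P.IsPerfectMatching

lemma matching_card {V : Type*} [Fintype V] {H : SimpleGraph V} {M : H.Subgraph}
    (hM : M.IsMatching) : M.verts.ncard = 2 * M.edgeSet.ncard := by
  classical
  have hfin : M.edgeSet.Finite := Set.toFinite _
  have hvfin : M.verts.Finite := Set.toFinite _
  set E : Finset (Sym2 V) := hfin.toFinset with hE
  set g : Sym2 V → Finset V := fun e => {e.out.1, e.out.2} with hg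
  have hmemg : ∀ e : Sym2 V, ∀ v, v ∈ e ↔ v ∈ g e := by
    intro e v
    have hmk : Quot.mk (Sym2.Rel V) e.out = s(e.out.1, e.out.2) := by rw [← Prod.mk.eta (p := e.out)]
    conv_lhs => rw [← e.out_eq, hmk]
    simp only [hg, Sym2.mem_iff, Finset.mem_insert, Finset.mem_singleton]
  have hadj : ∀ e ∈ E, ∀ v ∈ g e, ∃ y, M.Adj v y ∧ e = s(v, y) := by
    intro e he v hv
    obtain ⟨y, rfl⟩ := Sym2.mem_iff_exists.mp ((hmemg e v).mpr hv)
    exact ⟨y, SimpleGraph.Subgraph.mem_edgeSet.mp (hfin.mem_toFinset.mp he), rfl⟩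
  have hcard2 : ∀ e ∈ E, (g e).card = 2 := by
    intro e he
    have heE : e ∈ M.edgeSet := hfin.mem_toFinset.mp he
    have hne : e.out.1 ≠ e.out.2 := fun hc =>
      (H.not_isDiag_of_mem_edgeSet (M.edgeSet_subset heE))
        (e.out_eq ▸ (show Sym2.IsDiag (Quot.mk (Sym2.Rel V) e.out) from
          (Sym2.isDiag_iff_proj_eq (x := e.out.1) (y := e.out.2)).mpr hc))
    simp [hg, Finset.card_pair hne]
  have hdisj : ∀ e1 ∈ E, ∀ e2 ∈ E, e1 ≠ e2 → Disjoint (g e1) (g e2) := by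
    intro e1 he1 e2 he2 hne
    simp only [Finset.disjoint_left]
    intro v hv1 hv2
    obtain ⟨y1, hy1, he1'⟩ := hadj e1 he1 v hv1
    obtain ⟨y2, hy2, he2'⟩ := hadj e2 he2 v hv2
    obtain ⟨z, hz, huniq⟩ := hM (M.edge_vert hy1)
    exact hne (by rw [he1', he2', huniq y1 hy1, huniq y2 hy2])
  have huni : E.biUnion g = hvfin.toFinset := by
    ext v
    simp only [Finset.mem_biUnion, Set.Finite.mem_toFinset]
    constructor
    · rintro ⟨e, he, hv⟩
      obtain ⟨y, hy, _⟩ := hadj e he v hv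
      exact M.edge_vert hy
    · intro hv
      obtain ⟨y, hy, -⟩ := hM hv
      exact ⟨s(v, y), hfin.mem_toFinset.mpr (SimpleGraph.Subgraph.mem_edgeSet.mpr hy),
        (hmemg _ v).mp (Sym2.mem_mk_left v y)⟩
  have h1 : M.verts.ncard = hvfin.toFinset.card := Set.ncard_eq_toFinset_card _ hvfin
  have h2 : M.edgeSet.ncard = E.card := Set.ncard_eq_toFinset_card _ hfin
  rw [h1, h2, ← huni, Finset.card_biUnion hdisj, Finset.sum_congr rfl hcard2]
  simp [mul_comm]

lemma unsat_not_adj {V : Type*} {H : SimpleGraph V} {M : H.Subgraph}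
    (hM : IsMaximalMatching H M) {u v : V} (hu : u ∉ M.verts) (hv : v ∉ M.verts) :
    ¬ H.Adj u v := by
  intro h
  have hm2 : (H.subgraphOfAdj h).IsMatching := SimpleGraph.Subgraph.IsMatching.subgraphOfAdj h
  have hd : Disjoint M.support (H.subgraphOfAdj h).support := by
    rw [hM.1.support_eq_verts, hm2.support_eq_verts, SimpleGraph.subgraphOfAdj_verts]
    rw [Set.disjoint_right]
    rintro x (rfl | rfl) <;> assumption
  have hm' : (M ⊔ H.subgraphOfAdj h).IsMatching := hM.1.sup hm2 hd
  have heq := hM.2 _ hm' le_sup_left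
  apply hu
  rw [← heq, SimpleGraph.Subgraph.verts_sup]
  exact Set.mem_union_right _ (by simp)

lemma maximal_ncard_eq {V : Type*} [Fintype V] {H : SimpleGraph V} {r : ℕ}
    (hcard : Fintype.card V = 2 * r + 1) {M : H.Subgraph} (hM : IsMaximalMatching H M)
    (h3 : ∀ u v w : V, u ∉ M.verts → v ∉ M.verts → w ∉ M.verts →
      u ≠ v → u ≠ w → v ≠ w → False) :
    M.edgeSet.ncard = r := by
  have hv := matching_card hM.1
  have hcompl : M.verts.ncard + M.vertsᶜ.ncard = 2 * r + 1 := by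
    rw [Set.ncard_add_ncard_compl, Nat.card_eq_fintype_card, hcard]
  have hle : ¬ 2 < M.vertsᶜ.ncard := by
    intro h
    obtain ⟨a, ha, b, hb, c, hc, hab, hac, hbc⟩ := (Set.two_lt_ncard (Set.toFinite _)).mp h
    exact h3 a b c ha hb hc hab hac hbc
  omega

lemma count_aux {V : Type*} [Fintype V] {r : ℕ} {G H : SimpleGraph V} (hHG : H ≤ G)
    (f : completeBipartiteGraph (Fin r) (Fin r) ↪g G) {w a : V}
    (hcompl : (Set.range f)ᶜ = {w})
    (hAdj : ∀ x y : V, x ∈ Set.range (fun i : Fin r => f (Sum.inl i)) →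
      y ∈ Set.range (fun i : Fin r => f (Sum.inr i)) → x ≠ a → H.Adj x y)
    {M : H.Subgraph} (hM : IsMaximalMatching H M)
    {u₁ u₂ : V} (h₁ : u₁ ∈ Set.range (fun i : Fin r => f (Sum.inl i)))
    (h₂ : u₂ ∈ Set.range (fun i : Fin r => f (Sum.inl i)))
    (hne : u₁ ≠ u₂) (hu₁ : u₁ ∉ M.verts) (hu₂ : u₂ ∉ M.verts) : False := by
  classical
  set A := Set.range (fun i : Fin r => f (Sum.inl i)) with hA
  set B := Set.range (fun i : Fin r => f (Sum.inr i)) with hB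
  obtain ⟨u, huA, huM, hua⟩ : ∃ u, u ∈ A ∧ u ∉ M.verts ∧ u ≠ a := by
    by_cases h : u₁ = a
    · exact ⟨u₂, h₂, hu₂, fun hc => hne (h.trans hc.symm)⟩
    · exact ⟨u₁, h₁, hu₁, h⟩
  have hBsat : ∀ y ∈ B, y ∈ M.verts := by
    intro y hy
    by_contra hyM
    exact unsat_not_adj hM huM hyM (hAdj u y huA hy hua)
  have hpart : ∀ y ∈ B, ∃ x, M.Adj y x := fun y hy => (hM.1 (hBsat y hy)).exists
  set p : V → V := fun y => if h : y ∈ B then (hpart y h).choose else y with hp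
  have hpadj : ∀ y ∈ B, M.Adj y (p y) := by
    intro y hy
    simp only [hp, dif_pos hy]
    exact (hpart y hy).choose_spec
  have hinj : Set.InjOn p B := by
    intro y1 hy1 y2 hy2 hpe
    have a1 := (hpadj y1 hy1).symm
    have a2 := (hpadj y2 hy2).symm
    rw [hpe] at a1
    obtain ⟨z, hz, huniq⟩ := hM.1 a1.fst_mem
    rw [huniq y1 a1, huniq y2 a2]
  have himg : p '' B ⊆ (A \ {u₁, u₂}) ∪ {w} := by
    rintro x ⟨y, hy, rfl⟩
    have hadj := hpadj y hy
    have hGadj : G.Adj y (p y) := hHG (M.adj_sub hadj)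
    have hpB : p y ∉ B := by
      rintro ⟨j, hj⟩
      obtain ⟨i, hi⟩ := hy
      rw [← hj, ← hi] at hGadj
      simpa using f.map_rel_iff.mp hGadj
    have hpV : p y ∈ M.verts := hadj.snd_mem
    by_cases hx : p y ∈ Set.range f
    · obtain ⟨s, hs⟩ := hx
      cases s with
      | inl i =>
        left
        refine ⟨⟨i, hs⟩, ?_⟩
        rintro (rfl | rfl) <;> [exact hu₁ hpV; exact hu₂ hpV]
      | inr j => exact absurd ⟨j, hs⟩ hpB
    · right
      have : p y ∈ (Set.range ⇑f)ᶜ := hx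
      rw [hcompl] at this
      exact this
  -- cardinalities
  have hinjB : Function.Injective (fun i : Fin r => f (Sum.inr i)) :=
    fun i j h => Sum.inr.inj (f.injective h)
  have hinjA : Function.Injective (fun i : Fin r => f (Sum.inl i)) :=
    fun i j h => Sum.inl.inj (f.injective h)
  have hBcard : B.ncard = r := by
    rw [hB, ← Set.image_univ, Set.ncard_image_of_injective _ hinjB, Set.ncard_univ]
    simp
  have hAcard : A.ncard = r := by
    rw [hA, ← Set.image_univ, Set.ncard_image_of_injective _ hinjA, Set.ncard_univ]
    simp
  have hsub : ({u₁, u₂} : Set V) ⊆ A := by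
    rintro x (rfl | rfl) <;> assumption
  have hpair : ({u₁, u₂} : Set V).ncard = 2 := Set.ncard_pair hne
  have hdiff : (A \ {u₁, u₂}).ncard = r - 2 := by
    rw [Set.ncard_diff hsub, hAcard, hpair]
  have hr2 : 2 ≤ r := by
    have := Set.ncard_le_ncard hsub (Set.toFinite _)
    omega
  have himgcard : (p '' B).ncard = r := by
    rw [Set.ncard_image_of_injOn hinj, hBcard]
  have hle : (p '' B).ncard ≤ (A \ {u₁, u₂}).ncard + 1 := by
    refine le_trans (Set.ncard_le_ncard himg (Set.toFinite _)) ?_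
    refine le_trans (Set.ncard_union_le _ _) ?_
    simp
  omega

lemma biclique_aux {V : Type*} [Fintype V] {r : ℕ} {G : SimpleGraph V}
    (hcard : Fintype.card V = 2 * r + 1)
    (f : completeBipartiteGraph (Fin r) (Fin r) ↪g G) {w : V}
    (hcompl : (Set.range f)ᶜ = {w}) (i : Fin r) (hadjw : G.Adj w (f (Sum.inl i))) :
    ¬ ECE G := by
  classical
  set A := Set.range (fun i : Fin r => f (Sum.inl i)) with hA
  set B := Set.range (fun i : Fin r => f (Sum.inr i)) with hB
  set a := f (Sum.inl i) with ha
  set b := f (Sum.inr i) with hb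
  have hab : G.Adj a b := f.map_rel_iff.mpr (by simp)
  set H := G.deleteEdges {s(a, b)} with hH
  have hHG : H ≤ G := SimpleGraph.deleteEdges_le _
  -- swapped embedding
  have hswadj : ∀ u v : Fin r ⊕ Fin r,
      (completeBipartiteGraph (Fin r) (Fin r)).Adj (Equiv.sumComm (Fin r) (Fin r) u)
        (Equiv.sumComm (Fin r) (Fin r) v) ↔
      (completeBipartiteGraph (Fin r) (Fin r)).Adj u v := by
    intro u v
    cases u <;> cases v <;> simp
  set sw : completeBipartiteGraph (Fin r) (Fin r) ≃g completeBipartiteGraph (Fin r) (Fin r) :=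
    ⟨Equiv.sumComm (Fin r) (Fin r), by intro u v; exact hswadj u v⟩ with hsw
  set f' := f.comp sw.toEmbedding with hf'
  have hrange' : Set.range ⇑f' = Set.range ⇑f := by
    ext x
    constructor
    · rintro ⟨s, rfl⟩; exact ⟨sw s, rfl⟩
    · rintro ⟨s, rfl⟩; exact ⟨sw.symm s, by simp [hf']⟩
  have hcompl' : (Set.range ⇑f')ᶜ = {w} := by rw [hrange', hcompl]
  -- membership facts
  have hwf : w ∉ Set.range ⇑f := by
    intro hc
    have : w ∈ (Set.range ⇑f)ᶜ := hcompl ▸ rfl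
    exact this hc
  have hcover : ∀ x : V, x ∈ A ∨ x ∈ B ∨ x = w := by
    intro x
    by_cases hx : x ∈ Set.range ⇑f
    · obtain ⟨s, hs⟩ := hx
      cases s with
      | inl j => exact Or.inl ⟨j, hs⟩
      | inr j => exact Or.inr (Or.inl ⟨j, hs⟩)
    · have : x ∈ (Set.range ⇑f)ᶜ := hx
      rw [hcompl] at this
      exact Or.inr (Or.inr this)
  have hdisjAB : ∀ x, x ∈ A → x ∈ B → False := by
    rintro x ⟨j, hj⟩ ⟨k, hk⟩
    exact absurd (f.injective (hj.trans hk.symm)) (by simp)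
  have hwA : w ∉ A := fun ⟨j, hj⟩ => hwf ⟨_, hj⟩
  have hwB : w ∉ B := fun ⟨j, hj⟩ => hwf ⟨_, hj⟩
  have haA : a ∈ A := ⟨i, rfl⟩
  have hbB : b ∈ B := ⟨i, rfl⟩
  -- adjacency in H
  have hGadjAB : ∀ x y, x ∈ A → y ∈ B → G.Adj x y := by
    rintro x y ⟨j, hj⟩ ⟨k, hk⟩
    rw [← hj, ← hk]
    exact f.map_rel_iff.mpr (by simp)
  have hAdjH : ∀ x y : V, x ∈ A → y ∈ B → x ≠ a → H.Adj x y := by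
    intro x y hx hy hxa
    rw [hH, SimpleGraph.deleteEdges_adj]
    refine ⟨hGadjAB x y hx hy, ?_⟩
    simp only [Set.mem_singleton_iff, Sym2.eq_iff]
    rintro (⟨e1, e2⟩ | ⟨e1, e2⟩)
    · exact hxa e1
    · exact hdisjAB x hx (by rw [e1]; exact hbB)
  have hAdjH' : ∀ x y : V, x ∈ B → y ∈ A → x ≠ b → H.Adj x y := by
    intro x y hx hy hxb
    rw [hH, SimpleGraph.deleteEdges_adj]
    refine ⟨(hGadjAB y x hy hx).symm, ?_⟩
    simp only [Set.mem_singleton_iff, Sym2.eq_iff]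
    rintro (⟨e1, e2⟩ | ⟨e1, e2⟩)
    · exact hdisjAB y hy (by rw [e2]; exact hbB)
    · exact hxb e1
  have hwa : H.Adj w a := by
    rw [hH, SimpleGraph.deleteEdges_adj]
    refine ⟨hadjw, ?_⟩
    simp only [Set.mem_singleton_iff, Sym2.eq_iff]
    rintro (⟨e1, e2⟩ | ⟨e1, e2⟩)
    · exact hwA (by rw [e1]; exact haA)
    · exact hwB (by rw [e1]; exact hbB)
  -- the no-three-unsaturated property
  have h3 : ∀ M : H.Subgraph, IsMaximalMatching H M →
      ∀ u₁ u₂ u₃ : V, u₁ ∉ M.verts → u₂ ∉ M.verts → u₃ ∉ M.verts →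
        u₁ ≠ u₂ → u₁ ≠ u₃ → u₂ ≠ u₃ → False := by
    intro M hM u₁ u₂ u₃ hu₁ hu₂ hu₃ h12 h13 h23
    have twoA : ∀ x y : V, x ∈ A → y ∈ A → x ≠ y → x ∉ M.verts → y ∉ M.verts → False :=
      fun x y hx hy hxy hxm hym => count_aux hHG f hcompl hAdjH hM hx hy hxy hxm hym
    have twoB : ∀ x y : V, x ∈ B → y ∈ B → x ≠ y → x ∉ M.verts → y ∉ M.verts → False := by
      intro x y hx hy hxy hxm hym
      refine count_aux hHG f' hcompl' (a := b) ?_ hM ?_ ?_ hxy hxm hym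
      · intro x' y' hx' hy' hx'b
        refine hAdjH' x' y' ?_ ?_ hx'b
        · obtain ⟨j, hj⟩ := hx'; exact ⟨j, hj⟩
        · obtain ⟨j, hj⟩ := hy'; exact ⟨j, hj⟩
      · obtain ⟨j, hj⟩ := hx; exact ⟨j, hj⟩
      · obtain ⟨j, hj⟩ := hy; exact ⟨j, hj⟩
    have mixed : ∀ x y : V, x ∈ A → y ∈ B → x ∉ M.verts → y ∉ M.verts →
        w ∉ M.verts → False := by
      intro x y hx hy hxm hym hwm
      have hxa : x = a := by
        by_contra hxa
        exact unsat_not_adj hM hxm hym (hAdjH x y hx hy hxa)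
      exact unsat_not_adj hM hwm (hxa ▸ hxm) hwa
    rcases hcover u₁ with c1 | c1 | c1 <;> rcases hcover u₂ with c2 | c2 | c2 <;>
      rcases hcover u₃ with c3 | c3 | c3
    all_goals first
      | exact twoA u₁ u₂ c1 c2 h12 hu₁ hu₂
      | exact twoA u₁ u₃ c1 c3 h13 hu₁ hu₃
      | exact twoA u₂ u₃ c2 c3 h23 hu₂ hu₃
      | exact twoB u₁ u₂ c1 c2 h12 hu₁ hu₂
      | exact twoB u₁ u₃ c1 c3 h13 hu₁ hu₃
      | exact twoB u₂ u₃ c2 c3 h23 hu₂ hu₃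
      | exact h12 (c1.trans c2.symm)
      | exact h13 (c1.trans c3.symm)
      | exact h23 (c2.trans c3.symm)
      | exact mixed u₁ u₂ c1 c2 hu₁ hu₂ (c3 ▸ hu₃)
      | exact mixed u₁ u₃ c1 c3 hu₁ hu₃ (c2 ▸ hu₂)
      | exact mixed u₂ u₁ c2 c1 hu₂ hu₁ (c3 ▸ hu₃)
      | exact mixed u₂ u₃ c2 c3 hu₂ hu₃ (c1 ▸ hu₁)
      | exact mixed u₃ u₁ c3 c1 hu₃ hu₁ (c2 ▸ hu₂)
      | exact mixed u₃ u₂ c3 c2 hu₃ hu₂ (c1 ▸ hu₁)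
  have hEqui : Equimatchable H := by
    intro M₁ M₂ hM₁ hM₂
    rw [maximal_ncard_eq hcard hM₁ (h3 M₁ hM₁), maximal_ncard_eq hcard hM₂ (h3 M₂ hM₂)]
  rintro ⟨-, hdel⟩
  exact hdel a b hab hEqui

lemma clique_aux {V : Type*} [Fintype V] {r : ℕ} (hr : 1 ≤ r) {G : SimpleGraph V}
    (hcard : Fintype.card V = 2 * r + 1)
    (f : (⊤ : SimpleGraph (Fin (2 * r))) ↪g G) {w : V}
    (hcompl : (Set.range f)ᶜ = {w}) (i : Fin (2 * r)) (hadjw : G.Adj w (f i)) :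
    ¬ ECE G := by
  classical
  set S := Set.range ⇑f with hS
  set a := f i with ha
  have : Nontrivial (Fin (2 * r)) := Fin.nontrivial_iff_two_le.mpr (by omega)
  obtain ⟨j, hj⟩ := exists_ne i
  set b := f j with hb
  have haS : a ∈ S := ⟨i, rfl⟩
  have hbS : b ∈ S := ⟨j, rfl⟩
  have hab : G.Adj a b := f.map_rel_iff.mpr (by simpa using hj.symm)
  have hne_ab : a ≠ b := hab.ne
  set H := G.deleteEdges {s(a, b)} with hH
  have hwS : w ∉ S := by
    intro hc
    have : w ∈ (Set.range ⇑f)ᶜ := hcompl ▸ rfl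
    exact this hc
  have hcover : ∀ x : V, x ∈ S ∨ x = w := by
    intro x
    by_cases hx : x ∈ Set.range ⇑f
    · exact Or.inl hx
    · have : x ∈ (Set.range ⇑f)ᶜ := hx
      rw [hcompl] at this
      exact Or.inr this
  have hSadj : ∀ x y : V, x ∈ S → y ∈ S → x ≠ y → G.Adj x y := by
    rintro x y ⟨k, hk⟩ ⟨l, hl⟩ hxy
    rw [← hk, ← hl]
    exact f.map_rel_iff.mpr (by simp; intro hc; exact hxy (by rw [← hk, ← hl, hc]))
  have hHadj2 : ∀ z : V, z ∈ S → z ≠ a → z ≠ b → H.Adj z a := by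
    intro z hz hza hzb
    rw [hH, SimpleGraph.deleteEdges_adj]
    refine ⟨hSadj z a hz haS hza, ?_⟩
    simp only [Set.mem_singleton_iff, Sym2.eq_iff]
    rintro (⟨e1, e2⟩ | ⟨e1, e2⟩)
    · exact hza e1
    · exact hzb e1
  have hwa : H.Adj w a := by
    rw [hH, SimpleGraph.deleteEdges_adj]
    refine ⟨hadjw, ?_⟩
    simp only [Set.mem_singleton_iff, Sym2.eq_iff]
    rintro (⟨e1, e2⟩ | ⟨e1, e2⟩)
    · exact hwS (by rw [e1]; exact haS)
    · exact hwS (by rw [e1]; exact hbS)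
  have h3 : ∀ M : H.Subgraph, IsMaximalMatching H M →
      ∀ u₁ u₂ u₃ : V, u₁ ∉ M.verts → u₂ ∉ M.verts → u₃ ∉ M.verts →
        u₁ ≠ u₂ → u₁ ≠ u₃ → u₂ ≠ u₃ → False := by
    intro M hM u₁ u₂ u₃ hu₁ hu₂ hu₃ h12 h13 h23
    have sub : ∀ z : V, z ∉ M.verts → z ≠ a → z ≠ b → a ∉ M.verts → False := by
      intro z hzm hza hzb ham
      rcases hcover z with hz | hz
      · exact unsat_not_adj hM hzm ham (hHadj2 z hz hza hzb)
      · exact unsat_not_adj hM (hz ▸ hzm) ham hwa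
    have pairS : ∀ x y t : V, x ∈ S → y ∈ S → x ≠ y → x ∉ M.verts → y ∉ M.verts →
        t ∉ M.verts → t ≠ x → t ≠ y → False := by
      intro x y t hx hy hxy hxm hym htm htx hty
      have hnadj := unsat_not_adj hM hxm hym
      have hdel : s(x, y) = s(a, b) := by
        by_contra hne
        exact hnadj (by rw [hH, SimpleGraph.deleteEdges_adj]
                        exact ⟨hSadj x y hx hy hxy, by simpa using hne⟩)
      rw [Sym2.eq_iff] at hdel
      rcases hdel with ⟨e1, e2⟩ | ⟨e1, e2⟩
      · exact sub t htm (fun hc => htx (hc.trans e1.symm)) (fun hc => hty (hc.trans e2.symm))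
          (e1 ▸ hxm)
      · exact sub t htm (fun hc => hty (hc.trans e2.symm)) (fun hc => htx (hc.trans e1.symm))
          (e2 ▸ hym)
    rcases hcover u₁ with c1 | c1 <;> rcases hcover u₂ with c2 | c2 <;>
      rcases hcover u₃ with c3 | c3
    all_goals first
      | exact pairS u₁ u₂ u₃ c1 c2 h12 hu₁ hu₂ hu₃ (Ne.symm h13) (Ne.symm h23)
      | exact pairS u₁ u₃ u₂ c1 c3 h13 hu₁ hu₃ hu₂ (Ne.symm h12) h23
      | exact pairS u₂ u₃ u₁ c2 c3 h23 hu₂ hu₃ hu₁ h12 h13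
      | exact h12 (c1.trans c2.symm)
      | exact h13 (c1.trans c3.symm)
      | exact h23 (c2.trans c3.symm)
  have hEqui : Equimatchable H := by
    intro M₁ M₂ hM₁ hM₂
    rw [maximal_ncard_eq hcard hM₁ (h3 M₁ hM₁), maximal_ncard_eq hcard hM₂ (h3 M₂ hM₂)]
  rintro ⟨-, hdel⟩
  exact hdel a b hab hEqui

/-- Let `r ≥ 1` and let `G` be a connected graph on `2r+1` vertices. If `G` contains an
induced `K_{2r}` or an induced `K_{r,r}`, then `G` is not edge-critical equimatchable. -/
theorem contains_big_clique_or_biclique_not_ece {V : Type*} [Fintype V] (r : ℕ)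
    (hr : 1 ≤ r) (G : SimpleGraph V) (hconn : G.Connected)
    (hcard : Fintype.card V = 2 * r + 1)
    (hsub : Nonempty ((⊤ : SimpleGraph (Fin (2 * r))) ↪g G) ∨
      Nonempty (completeBipartiteGraph (Fin r) (Fin r) ↪g G)) :
    ¬ ECE G := by
  classical
  -- helper to find the leftover vertex and w's neighbor
  have key : ∀ {W : Type} [Fintype W], ∀ (f : W → V), Function.Injective f →
      Fintype.card W = 2 * r → ∃ w : V, (Set.range f)ᶜ = {w} := by
    intro W _ f hinj hW
    have h1 : (Set.range f).ncard = 2 * r := by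
      rw [← Set.image_univ, Set.ncard_image_of_injective _ hinj, Set.ncard_univ,
        Nat.card_eq_fintype_card, hW]
    have h2 : (Set.range f).ncard + (Set.range f)ᶜ.ncard = 2 * r + 1 := by
      rw [Set.ncard_add_ncard_compl, Nat.card_eq_fintype_card, hcard]
    have h3 : (Set.range f)ᶜ.ncard = 1 := by omega
    exact Set.ncard_eq_one.mp h3
  have hnontriv : Nontrivial V := by
    rw [← Fintype.one_lt_card_iff_nontrivial, hcard]; omega
  -- w's neighbor
  have neigh : ∀ w : V, ∃ x : V, G.Adj w x := by
    intro w
    obtain ⟨v, hv⟩ := exists_ne w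
    obtain ⟨p⟩ := hconn.preconnected w v
    cases p with
    | nil => exact absurd rfl hv.symm
    | cons h q => exact ⟨_, h⟩
  obtain hl | hl := hsub
  · obtain ⟨f⟩ := hl
    obtain ⟨w, hcompl⟩ := key ⇑f f.injective (by simp)
    obtain ⟨x, hx⟩ := neigh w
    have hxS : x ∈ Set.range ⇑f := by
      by_contra hc
      have : x ∈ (Set.range ⇑f)ᶜ := hc
      rw [hcompl] at this
      exact G.loopless.irrefl w (this ▸ hx)
    obtain ⟨i, hi⟩ := hxS
    exact clique_aux hr hcard f hcompl i (hi ▸ hx)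
  · obtain ⟨f⟩ := hl
    obtain ⟨w, hcompl⟩ := key ⇑f f.injective (by simp [two_mul])
    obtain ⟨x, hx⟩ := neigh w
    have hxS : x ∈ Set.range ⇑f := by
      by_contra hc
      have : x ∈ (Set.range ⇑f)ᶜ := hc
      rw [hcompl] at this
      exact G.loopless.irrefl w (this ▸ hx)
    obtain ⟨s, hs⟩ := hxS
    cases s with
    | inl i => exact biclique_aux hcard f hcompl i (hs ▸ hx)
    | inr i =>
      have hswadj : ∀ u v : Fin r ⊕ Fin r,
          (completeBipartiteGraph (Fin r) (Fin r)).Adj (Equiv.sumComm (Fin r) (Fin r) u)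
            (Equiv.sumComm (Fin r) (Fin r) v) ↔
          (completeBipartiteGraph (Fin r) (Fin r)).Adj u v := by
        intro u v
        cases u <;> cases v <;> simp
      set sw : completeBipartiteGraph (Fin r) (Fin r) ≃g
          completeBipartiteGraph (Fin r) (Fin r) :=
        ⟨Equiv.sumComm (Fin r) (Fin r), by intro u v; exact hswadj u v⟩ with hsw
      set f' := f.comp sw.toEmbedding with hf'
      have hrange' : Set.range ⇑f' = Set.range ⇑f := by
        ext z
        constructor
        · rintro ⟨s, rfl⟩; exact ⟨sw s, rfl⟩
        · rintro ⟨s, rfl⟩; exact ⟨sw.symm s, by simp [hf']⟩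
      have hcompl' : (Set.range ⇑f')ᶜ = {w} := by rw [hrange', hcompl]
      exact biclique_aux hcard f' hcompl' i (hs ▸ hx)
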